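/- Let Φ₀, Φ₁, …, Φ_k be continuous, nonnegative, strictly increasing functions on [0,∞) with Φᵢ(0) = 0 and Φᵢ(t) → ∞ as t → ∞, and suppose Φ₁⁻¹(t)·Φ₂⁻¹(t)⋯Φ_k⁻¹(t) ≤ Φ₀⁻¹(t) for all t ≥ 0. Then for all nonnegative reals x₁, …, x_k one has Φ₀(x₁·x₂⋯x_k) ≤ Φ₁(x₁) + Φ₂(x₂) + ⋯ + Φ_k(x_k). -/
import Mathlib


open Finset

theorem stmt4 (k : ℕ) (Φ0 : ℝ → ℝ) (Φ : Fin k → ℝ → ℝ) (Ψ0 : ℝ → ℝ) (Ψ : Fin k → ℝ → ℝ)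
    (hcont0 : ContinuousOn Φ0 (Set.Ici 0)) (hmono0 : StrictMonoOn Φ0 (Set.Ici 0))
    (hnn0 : ∀ t, 0 ≤ t → 0 ≤ Φ0 t) (h00 : Φ0 0 = 0)
    (htop0 : Filter.Tendsto Φ0 Filter.atTop Filter.atTop)
    (hcont : ∀ i, ContinuousOn (Φ i) (Set.Ici 0))
    (hmono : ∀ i, StrictMonoOn (Φ i) (Set.Ici 0))
    (hnn : ∀ i t, 0 ≤ t → 0 ≤ Φ i t) (h0 : ∀ i, Φ i 0 = 0)
    (htop : ∀ i, Filter.Tendsto (Φ i) Filter.atTop Filter.atTop)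
    (hΨ0 : ∀ t, 0 ≤ t → 0 ≤ Ψ0 t ∧ Φ0 (Ψ0 t) = t)
    (hΨ0' : ∀ x, 0 ≤ x → Ψ0 (Φ0 x) = x)
    (hΨ : ∀ i t, 0 ≤ t → 0 ≤ Ψ i t ∧ Φ i (Ψ i t) = t)
    (hΨ' : ∀ i x, 0 ≤ x → Ψ i (Φ i x) = x)
    (hineq : ∀ t, 0 ≤ t → (∏ i, Ψ i t) ≤ Ψ0 t) :
    ∀ x : Fin k → ℝ, (∀ i, 0 ≤ x i) → Φ0 (∏ i, x i) ≤ ∑ i, Φ i (x i) := by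
  intro x hx
  set t := ∑ i, Φ i (x i) with ht
  have ht0 : 0 ≤ t := Finset.sum_nonneg fun i _ => hnn i (x i) (hx i)
  have hxle : ∀ i, x i ≤ Ψ i t := by
    intro i
    have h1 : Φ i (x i) ≤ t :=
      Finset.single_le_sum (f := fun j => Φ j (x j)) (fun j _ => hnn j (x j) (hx j))
        (Finset.mem_univ i)
    have h2 := hΨ i t ht0
    have h3 : Φ i (x i) ≤ Φ i (Ψ i t) := by rw [h2.2]; exact h1
    exact ((hmono i).le_iff_le (hx i) h2.1).mp h3
  have hprod : (∏ i, x i) ≤ Ψ0 t := by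
    refine le_trans ?_ (hineq t ht0)
    exact Finset.prod_le_prod (fun i _ => hx i) (fun i _ => hxle i)
  have hprod0 : 0 ≤ ∏ i, x i := Finset.prod_nonneg fun i _ => hx i
  have := hmono0.monotoneOn hprod0 (hΨ0 t ht0).1 hprod
  calc Φ0 (∏ i, x i) ≤ Φ0 (Ψ0 t) := this
    _ = t := (hΨ0 t ht0).2
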